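/- Let E_1, E_2 be matrices of the same size over F_q with column spaces C_1, C_2 and row spaces R_1, R_2. If dim(C_1 ∩ C_2) = i and dim(R_1 ∩ R_2) = j, then rank(E_1) + rank(E_2) - i - j ≤ rank(E_1 + E_2) ≤ rank(E_1) + rank(E_2) - max(i, j). -/

import Mathlib

open Matrix Submodule Module

-- upper bound via column spaces
lemma aux_col_ub (F : Type) [Field F] (m n : ℕ)
    (E1 E2 : Matrix (Fin m) (Fin n) F) :
    (E1 + E2).rank + finrank F ↥(span F (Set.range E1ᵀ) ⊓ span F (Set.range E2ᵀ))
      ≤ E1.rank + E2.rank := by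
  set C1 := span F (Set.range E1ᵀ)
  set C2 := span F (Set.range E2ᵀ)
  have h1 : span F (Set.range (E1 + E2)ᵀ) ≤ C1 ⊔ C2 := by
    rw [span_le]
    rintro _ ⟨k, rfl⟩
    have : (E1 + E2)ᵀ k = E1ᵀ k + E2ᵀ k := by
      ext l; simp [Matrix.transpose_apply, Matrix.add_apply]
    rw [SetLike.mem_coe, this]
    have m1 : E1ᵀ k ∈ C1 ⊔ C2 := SetLike.le_def.mp le_sup_left (subset_span (Set.mem_range_self k))
    have m2 : E2ᵀ k ∈ C1 ⊔ C2 := SetLike.le_def.mp le_sup_right (subset_span (Set.mem_range_self k))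
    exact add_mem m1 m2
  have h2 : (E1 + E2).rank ≤ finrank F ↥(C1 ⊔ C2) := by
    rw [Matrix.rank_eq_finrank_span_cols]
    exact Submodule.finrank_mono h1
  have h3 := Submodule.finrank_sup_add_finrank_inf_eq C1 C2
  have h4 : E1.rank = finrank F ↥C1 := Matrix.rank_eq_finrank_span_cols E1
  have h5 : E2.rank = finrank F ↥C2 := Matrix.rank_eq_finrank_span_cols E2
  omega
set_option maxHeartbeats 800000 in
set_option synthInstance.maxHeartbeats 200000 in
lemma aux_lb (F : Type) [Field F] (m n : ℕ)
    (E1 E2 : Matrix (Fin m) (Fin n) F) :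
    E1.rank + E2.rank ≤ (E1 + E2).rank
      + finrank F ↥(span F (Set.range E1ᵀ) ⊓ span F (Set.range E2ᵀ))
      + finrank F ↥(span F (Set.range E1) ⊓ span F (Set.range E2)) := by
  classical
  set f := E1.mulVecLin
  set g := E2.mulVecLin
  set σ : ((Fin m → F) × (Fin m → F)) →ₗ[F] (Fin m → F) :=
    LinearMap.id.coprod LinearMap.id with hσ
  set T := f.prod g with hT
  set P := LinearMap.range T with hP
  -- rank of the sum as the image of P under σ
  have hcomp : (E1 + E2).mulVecLin = σ.comp T := by
    rw [Matrix.mulVecLin_add]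
    refine LinearMap.ext fun x => rfl
  have hrange : LinearMap.range ((E1 + E2).mulVecLin) = P.map σ := by
    rw [hcomp, LinearMap.range_comp]
  have hr : (E1 + E2).rank = finrank F ↥(P.map σ) := by
    rw [Matrix.rank, hrange]
  -- rank-nullity for σ restricted to P
  set σ' := σ.domRestrict P with hσ'
  have h1 : finrank F ↥(P.map σ) + finrank F ↥(LinearMap.ker σ') = finrank F ↥P := by
    have := LinearMap.finrank_range_add_finrank_ker σ'
    rwa [hσ', LinearMap.range_domRestrict] at this
  -- the kernel embeds into C1 ⊓ C2
  have hq : finrank F ↥(LinearMap.ker σ') ≤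
      finrank F ↥(span F (Set.range E1ᵀ) ⊓ span F (Set.range E2ᵀ)) := by
    set φ₀ : ↥(LinearMap.ker σ') →ₗ[F] (Fin m → F) :=
      (LinearMap.fst F (Fin m → F) (Fin m → F)).comp
        (P.subtype.comp (LinearMap.ker σ').subtype) with hφ₀
    have key : ∀ x : ↥(LinearMap.ker σ'),
        ((x : ↥P) : (Fin m → F) × (Fin m → F)).1 ∈
          span F (Set.range E1ᵀ) ⊓ span F (Set.range E2ᵀ) ∧
        ((x : ↥P) : (Fin m → F) × (Fin m → F)).1
          + ((x : ↥P) : (Fin m → F) × (Fin m → F)).2 = 0 := by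
      intro x
      obtain ⟨y, hy⟩ := (x : ↥P).2
      have hker : σ' (x : ↥P) = 0 := x.2
      have hsum : ((x : ↥P) : (Fin m → F) × (Fin m → F)).1
          + ((x : ↥P) : (Fin m → F) × (Fin m → F)).2 = 0 := x.2
      have hfst : ((x : ↥P) : (Fin m → F) × (Fin m → F)).1 = f y := by rw [← hy]; rfl
      have hsnd : ((x : ↥P) : (Fin m → F) × (Fin m → F)).2 = g y := by rw [← hy]; rfl
      refine ⟨⟨?_, ?_⟩, hsum⟩
      · rw [hfst, show span F (Set.range E1ᵀ) = span F (Set.range E1.col) from rfl,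
          ← Matrix.range_mulVecLin]
        exact LinearMap.mem_range_self f y
      · have : ((x : ↥P) : (Fin m → F) × (Fin m → F)).1 = g (-y) := by
          rw [map_neg, ← hsnd]
          exact eq_neg_of_add_eq_zero_left hsum
        rw [this, show span F (Set.range E2ᵀ) = span F (Set.range E2.col) from rfl,
          ← Matrix.range_mulVecLin]
        exact LinearMap.mem_range_self g (-y)
    have hmem : ∀ x : ↥(LinearMap.ker σ'),
        φ₀ x ∈ span F (Set.range E1ᵀ) ⊓ span F (Set.range E2ᵀ) := fun x => (key x).1
    set φ := φ₀.codRestrict _ hmem with hφ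
    have hinj : Function.Injective φ := by
      intro a b hab
      have h0 : ((a : ↥P) : (Fin m → F) × (Fin m → F)).1
          = ((b : ↥P) : (Fin m → F) × (Fin m → F)).1 := congrArg Subtype.val hab
      have h2 : ((a : ↥P) : (Fin m → F) × (Fin m → F)).2
          = ((b : ↥P) : (Fin m → F) × (Fin m → F)).2 := by
        have ha := (key a).2
        have hb := (key b).2
        rw [h0] at ha
        have := ha.trans hb.symm
        exact add_left_cancel this
      exact Subtype.ext (Subtype.ext (Prod.ext h0 h2))
    exact LinearMap.finrank_le_finrank_of_injective hinj
  -- finrank P via rank-nullity of T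
  have h2 : finrank F ↥P + finrank F ↥(LinearMap.ker f ⊓ LinearMap.ker g) = n := by
    have := LinearMap.finrank_range_add_finrank_ker T
    rwa [← hP, LinearMap.ker_prod, Module.finrank_pi, Fintype.card_fin] at this
  -- the stacked matrix
  set M := Matrix.fromRows E1 E2 with hM
  have hkerM : LinearMap.ker M.mulVecLin = LinearMap.ker f ⊓ LinearMap.ker g := by
    ext x
    simp only [LinearMap.mem_ker, Submodule.mem_inf, Matrix.mulVecLin_apply, hM,
      Matrix.fromRows_mulVec, f, g]
    constructor
    · intro h
      constructor
      · funext k; exact congrFun h (Sum.inl k)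
      · funext k; exact congrFun h (Sum.inr k)
    · rintro ⟨ha, hb⟩
      funext k; cases k with
      | inl k => exact congrFun ha k
      | inr k => exact congrFun hb k
  have h3 : M.rank + finrank F ↥(LinearMap.ker f ⊓ LinearMap.ker g) = n := by
    have := LinearMap.finrank_range_add_finrank_ker M.mulVecLin
    rwa [← Matrix.rank, hkerM, Module.finrank_pi, Fintype.card_fin] at this
  -- rank M = finrank (R1 ⊔ R2)
  have hrows : M.rank = finrank F ↥(span F (Set.range E1) ⊔ span F (Set.range E2)) := by
    rw [← Matrix.rank_transpose, Matrix.rank_eq_finrank_span_cols]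
    show finrank F ↥(span F (Set.range M)) = _
    have hr' : Set.range M = Set.range E1 ∪ Set.range E2 := Set.Sum.elim_range E1 E2
    rw [hr', Submodule.span_union]
  have h4 := Submodule.finrank_sup_add_finrank_inf_eq
    (span F (Set.range E1)) (span F (Set.range E2))
  have h5 : E1.rank = finrank F ↥(span F (Set.range E1)) := by
    rw [← Matrix.rank_transpose, Matrix.rank_eq_finrank_span_cols]; rfl
  have h6 : E2.rank = finrank F ↥(span F (Set.range E2)) := by
    rw [← Matrix.rank_transpose, Matrix.rank_eq_finrank_span_cols]; rfl
  omega


theorem rank_sum_marsaglia (F : Type) [Field F] (m n : ℕ)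
    (E1 E2 : Matrix (Fin m) (Fin n) F) (i j : ℕ)
    (hC : Module.finrank F
        ↥(Submodule.span F (Set.range E1ᵀ) ⊓ Submodule.span F (Set.range E2ᵀ)) = i)
    (hR : Module.finrank F
        ↥(Submodule.span F (Set.range E1) ⊓ Submodule.span F (Set.range E2)) = j) :
    ((E1.rank : ℤ) + (E2.rank : ℤ) - (i : ℤ) - (j : ℤ) ≤ ((E1 + E2).rank : ℤ)) ∧
    (((E1 + E2).rank : ℤ) ≤ (E1.rank : ℤ) + (E2.rank : ℤ) - (max i j : ℤ)) := by
  have hub1 := aux_col_ub F m n E1 E2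
  have hub2 := aux_col_ub F n m E1ᵀ E2ᵀ
  rw [← Matrix.transpose_add, Matrix.rank_transpose, Matrix.rank_transpose,
    Matrix.rank_transpose, Matrix.transpose_transpose, Matrix.transpose_transpose] at hub2
  have hlb := aux_lb F m n E1 E2
  rw [hC] at hub1 hlb
  rw [hR] at hub2 hlb
  constructor
  · omega
  · rcases le_total i j with h | h
    · rw [max_eq_right (show (i:ℤ) ≤ (j:ℤ) by exact_mod_cast h)]; omega
    · rw [max_eq_left (show (j:ℤ) ≤ (i:ℤ) by exact_mod_cast h)]; omega
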